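/- For all real x < 0, the quantity 2·(e^x − 1)/x − (e^x − 1 − x)/(x²/2) equals (2/x)·∑_{k=1}^∞ (k/(k+1)!)·x^k, and this quantity is nonnegative. -/

import Mathlib

/-- `(e^x − 1 − x)/(x²/2)`. -/
noncomputable def Efun (x : ℝ) : ℝ := (Real.exp x - 1 - x) / (x ^ 2 / 2)

/-- `(e^x − 1)/x`. -/
noncomputable def Tfun (x : ℝ) : ℝ := (Real.exp x - 1) / x

lemma exp_tsum (x : ℝ) : Real.exp x = ∑' n : ℕ, x ^ n / n.factorial := by
  rw [Real.exp_eq_exp_ℝ, NormedSpace.exp_eq_tsum_div]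

lemma summable_shift (x : ℝ) : Summable (fun k : ℕ => x ^ (k + 1) / (k + 1).factorial) :=
  (Real.summable_pow_div_factorial x).comp_injective Nat.succ_injective

lemma summable_shift2 (x : ℝ) : Summable (fun k : ℕ => x ^ (k + 2) / (k + 2).factorial) :=
  (Real.summable_pow_div_factorial x).comp_injective
    (fun a b h => by simpa using h)

lemma tsum1 (x : ℝ) : ∑' k : ℕ, x ^ (k + 1) / (k + 1).factorial = Real.exp x - 1 := by
  have h := Summable.tsum_eq_zero_add (Real.summable_pow_div_factorial x)
  rw [← exp_tsum] at h
  simp only [pow_zero, Nat.factorial_zero] at h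
  push_cast at h
  linarith

lemma tsum2 (x : ℝ) : ∑' k : ℕ, x ^ (k + 2) / (k + 2).factorial = Real.exp x - 1 - x := by
  have h := Summable.tsum_eq_zero_add (summable_shift x)
  rw [tsum1] at h
  norm_num at h
  have : ∀ k : ℕ, x ^ (k + 1 + 1) / (k + 1 + 1).factorial = x ^ (k + 2) / (k + 2).factorial := by
    intro k; norm_num
  rw [tsum_congr this] at h
  linarith

/-- For `x < 0`, `2(e^x−1)/x − (e^x−1−x)/(x²/2) = (2/x)·∑_{k=1}^∞ (k/(k+1)!) x^k`,
and this quantity is nonnegative. -/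
theorem stmt2 (x : ℝ) (hx : x < 0) :
    2 * Tfun x - Efun x
      = (2 / x) * ∑' k : ℕ, (((k + 1 : ℕ) : ℝ) / (Nat.factorial (k + 2) : ℝ)) * x ^ (k + 1) ∧
    0 ≤ 2 * Tfun x - Efun x := by
  have hx0 : x ≠ 0 := ne_of_lt hx
  constructor
  · have hterm : ∀ k : ℕ, (((k + 1 : ℕ) : ℝ) / (Nat.factorial (k + 2) : ℝ)) * x ^ (k + 1)
        = x ^ (k + 1) / (k + 1).factorial - (1 / x) * (x ^ (k + 2) / (k + 2).factorial) := by
      intro k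
      have hf2 : ((k + 2).factorial : ℝ) = ((k + 2 : ℕ) : ℝ) * ((k + 1).factorial : ℝ) := by
        rw [Nat.factorial_succ]; push_cast; ring
      have h1 : ((k + 1).factorial : ℝ) ≠ 0 := Nat.cast_ne_zero.2 (Nat.factorial_ne_zero _)
      have h2 : ((k + 2 : ℕ) : ℝ) ≠ 0 := by positivity
      rw [hf2]
      have hpow : x ^ (k + 2) = x ^ (k + 1) * x := by ring
      rw [hpow]
      field_simp
      push_cast
      ring
    rw [tsum_congr hterm,
      Summable.tsum_sub (summable_shift x) ((summable_shift2 x).mul_left (1 / x)),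
      tsum1, tsum_mul_left, tsum2]
    simp only [Tfun, Efun]
    field_simp
  · have key : 2 * Tfun x - Efun x = 2 * ((x - 1) * Real.exp x + 1) / x ^ 2 := by
      simp only [Tfun, Efun]; field_simp; ring
    rw [key]
    have h1 : -x + 1 ≤ Real.exp (-x) := Real.add_one_le_exp (-x)
    have h2 : Real.exp (-x) * Real.exp x = 1 := by
      rw [← Real.exp_add]; simp
    have h3 : 0 < Real.exp x := Real.exp_pos x
    have h4 : 0 ≤ (x - 1) * Real.exp x + 1 := by nlinarith
    positivity
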